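/- Let η be a partition (weakly decreasing composition) and ν a partition in ℕ^N. Then ν ≼ η (as defined via: there exists π ∈ S_N with ν_i < η_{π(i)} for i < π(i) and ν_i ≤ η_{π(i)} for i ≥ π(i)) if and only if ν_i ≤ η_i for all i. -/
import Mathlib


/-- The partial order `≼` on compositions: `ν ≼ η` iff there exists a permutation `π`
with `ν_i < η_{π(i)}` for `i < π(i)` and `ν_i ≤ η_{π(i)}` for `i ≥ π(i)`. -/
def Preceq {N : ℕ} (ν η : Fin N → ℕ) : Prop :=
  ∃ π : Equiv.Perm (Fin N), ∀ i : Fin N,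
    (i < π i → ν i < η (π i)) ∧ (π i ≤ i → ν i ≤ η (π i))

theorem stmt_4 (N : ℕ) (η ν : Fin N → ℕ)
    (hη : ∀ i j : Fin N, i ≤ j → η j ≤ η i) (hν : ∀ i j : Fin N, i ≤ j → ν j ≤ ν i) :
    Preceq ν η ↔ ∀ i, ν i ≤ η i := by
  constructor
  · rintro ⟨π, hπ⟩ i
    have hex : ∃ j, j ≤ i ∧ i ≤ π j := by
      by_contra hc
      push_neg at hc
      have hsub : (Finset.Iic i).image π ⊆ Finset.Iio i := by
        intro x hx
        simp only [Finset.mem_image, Finset.mem_Iic] at hx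
        obtain ⟨j, hj, rfl⟩ := hx
        exact Finset.mem_Iio.mpr (hc j hj)
      have h1 : ((Finset.Iic i).image π).card = (Finset.Iic i).card :=
        Finset.card_image_of_injective _ π.injective
      have h2 := Finset.card_le_card hsub
      rw [h1, Fin.card_Iic, Fin.card_Iio] at h2
      omega
    obtain ⟨j, hj, hij⟩ := hex
    have hνij : ν i ≤ ν j := hν j i hj
    have hηij : η (π j) ≤ η i := hη i (π j) hij
    rcases lt_or_ge j (π j) with h | h
    · have := (hπ j).1 h
      omega
    · have := (hπ j).2 h
      omega
  · intro h
    exact ⟨Equiv.refl _, fun i => ⟨fun hlt => absurd hlt (lt_irrefl _), fun _ => h i⟩⟩
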